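/- Let n be a natural number and let f : ℤ → ℤ be a monotone function satisfying f(k + (n+1)) = f(k) + (n+1) for all k ∈ ℤ. If the induced map φ_f : ZMod (n+1) → ZMod (n+1) is a bijection, then f is a translation: there exists c ∈ ℤ such that f(k) = k + c for all k ∈ ℤ. (Consequently, for any i, j ∈ ZMod (n+1) there is a unique automorphism of ⟨n⟩ in the cyclic category Λ sending i to j.) -/

import Mathlib

/-- Let `f : ℤ → ℤ` be monotone with `f(k + (n+1)) = f(k) + (n+1)` for all `k`. If the induced
map `φ_f : ℤ/(n+1) → ℤ/(n+1)` is a bijection, then `f` is a translation `k ↦ k + c`.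
(Consequently, for any `i, j ∈ ℤ/(n+1)` there is a unique automorphism of `⟨n⟩` in the cyclic
category `Λ` sending `i` to `j`.) -/
theorem stmt_12 (n : ℕ) (f : ℤ → ℤ) (hmono : Monotone f)
    (heq : ∀ k : ℤ, f (k + (n + 1)) = f k + (n + 1))
    (φ : ZMod (n + 1) → ZMod (n + 1))
    (hφ : ∀ k : ℤ, φ ((k : ZMod (n + 1))) = ((f k : ℤ) : ZMod (n + 1)))
    (hbij : Function.Bijective φ) :
    ∃ c : ℤ, ∀ k : ℤ, f k = k + c := by
  have hN : (0:ℤ) < (n:ℤ) + 1 := by positivity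
  -- f is injective
  have hinj : Function.Injective f := by
    intro a b hab
    by_contra hne
    -- wlog a < b
    wlog hlt : a < b generalizing a b
    · exact this hab.symm (Ne.symm hne) (lt_of_le_of_ne (not_lt.mp hlt) (Ne.symm hne))
    have h1 : (a : ZMod (n+1)) = (b : ZMod (n+1)) := by
      apply hbij.1
      rw [hφ a, hφ b, hab]
    have hdvd : ((n:ℤ)+1) ∣ b - a := by
      have h2 := ((ZMod.intCast_eq_intCast_iff a b (n+1)).mp h1).dvd
      simpa using h2
    have hge : a + ((n:ℤ)+1) ≤ b := by
      have : (n:ℤ)+1 ≤ b - a := Int.le_of_dvd (by omega) hdvd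
      omega
    have : f a + ((n:ℤ)+1) ≤ f b := by
      calc f a + ((n:ℤ)+1) = f (a + ((n:ℤ)+1)) := (heq a).symm
        _ ≤ f b := hmono hge
    omega
  have hsm : StrictMono f := hmono.strictMono_of_injective hinj
  -- f(a+m) ≥ f(a)+m for natural m
  have hstep : ∀ (a : ℤ) (m : ℕ), f a + m ≤ f (a + m) := by
    intro a m
    induction m with
    | zero => simp
    | succ m ih =>
      have h1 : f (a + m) < f (a + m + 1) := hsm (by omega)
      push_cast
      rw [show a + ((m:ℤ) + 1) = a + (m:ℤ) + 1 by ring]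
      omega
  -- f(k+1) = f(k)+1
  have hone : ∀ k : ℤ, f (k + 1) = f k + 1 := by
    intro k
    have h1 : f k + 1 ≤ f (k + 1) := by
      have := hsm (show k < k + 1 by omega); omega
    have h2 : f (k + 1) + n ≤ f (k + 1 + n) := hstep (k+1) n
    have h3 : k + 1 + (n:ℤ) = k + ((n:ℤ)+1) := by ring
    have h4 : f (k + ((n:ℤ)+1)) = f k + ((n:ℤ)+1) := heq k
    rw [h3, h4] at h2
    omega
  refine ⟨f 0, fun k => ?_⟩
  induction k using Int.induction_on with
  | zero => simp
  | succ i ih => rw [hone i, ih]; ring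
  | pred i ih =>
    have := hone (-(i:ℤ) - 1)
    have h : -(i:ℤ) - 1 + 1 = -(i:ℤ) := by ring
    rw [h] at this
    omega
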